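/- Let I be an SPA-ST instance and consider the IP model J with binary variables x_{ij} for each student s_i and project p_j, and binary variables α_{ij}, β_{ij}, subject to: (1) x_{ij}=0 if p_j is unacceptable to s_i; (2) Σ_j x_{ij} ≤ 1 for each s_i; (3) Σ_i x_{ij} ≤ c_j for each p_j; (4) Σ_i Σ_{p_j∈P_k} x_{ij} ≤ d_k for each l_k; (5) 1 − Σ_{p_r∈S_{ij}} x_{ir} ≤ α_{ij} + β_{ij}; (6) Σ_{s_u∈T_{ik}} Σ_{p_r∈P_k} x_{ur} ≥ d_k·α_{ij}; (7) Σ_{s_u∈T_{ijk}} x_{uj} ≥ c_j·β_{ij}. Then the feasible solutions of J (projected to x) are exactly the stable matchings of I, i.e. M = {(s_i,p_j) : x_{ij}=1} is a stable matching iff some (α,β) makes (x,α,β) feasible. -/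

import Mathlib

open scoped Classical
open Finset

/-- An instance of the Student-Project Allocation problem with lecturer
preferences over students, with ties (SPA-ST).  Preferences are encoded by
rank functions: a lower rank means more preferred; equal ranks encode ties. -/
structure SPAST (S P L : Type) where
  /-- the lecturer offering each project -/
  lec : P → L
  /-- project capacities -/
  cap : P → ℕ
  /-- lecturer capacities -/
  dcap : L → ℕ
  /-- `acc s p` iff student `s` finds project `p` acceptable -/
  acc : S → P → Prop
  /-- student rank function (lower is better); meaningful on acceptable projects -/
  sRank : S → P → ℕ
  /-- lecturer rank function over students (lower is better) -/
  lRank : L → S → ℕ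

variable {S P L : Type}

/-- students assigned to a project in `M` -/
noncomputable def projAssignees [Fintype S] (M : S → Option P) (p : P) : Finset S :=
  Finset.univ.filter (fun s => M s = some p)

/-- students assigned to some project of lecturer `k` in `M` -/
noncomputable def lecAssignees [Fintype S] (I : SPAST S P L) (M : S → Option P) (k : L) :
    Finset S :=
  Finset.univ.filter (fun s => ∃ p, M s = some p ∧ I.lec p = k)

def IsMatching [Fintype S] (I : SPAST S P L) (M : S → Option P) : Prop :=
  (∀ s p, M s = some p → I.acc s p) ∧
  (∀ p, (projAssignees M p).card ≤ I.cap p) ∧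
  (∀ k, (lecAssignees I M k).card ≤ I.dcap k)

def ProjFull [Fintype S] (I : SPAST S P L) (M : S → Option P) (p : P) : Prop :=
  (projAssignees M p).card = I.cap p

def LecFull [Fintype S] (I : SPAST S P L) (M : S → Option P) (k : L) : Prop :=
  (lecAssignees I M k).card = I.dcap k

/-- `s` finds `p` acceptable and is unassigned or strictly prefers `p` to `M(s)`. -/
def WantsToMove (I : SPAST S P L) (M : S → Option P) (s : S) (p : P) : Prop :=
  I.acc s p ∧ (M s = none ∨ ∃ p', M s = some p' ∧ I.sRank s p < I.sRank s p')

/-- `(s, p)` is a blocking pair of `M`. -/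
def Blocks [Fintype S] (I : SPAST S P L) (M : S → Option P) (s : S) (p : P) : Prop :=
  WantsToMove I M s p ∧
  ( (¬ ProjFull I M p ∧ ¬ LecFull I M (I.lec p)) ∨
    (¬ ProjFull I M p ∧ LecFull I M (I.lec p) ∧
      (s ∈ lecAssignees I M (I.lec p) ∨
       ∃ s' ∈ lecAssignees I M (I.lec p), I.lRank (I.lec p) s < I.lRank (I.lec p) s')) ∨
    (ProjFull I M p ∧
       ∃ s' ∈ projAssignees M p, I.lRank (I.lec p) s < I.lRank (I.lec p) s') )

def Stable [Fintype S] (I : SPAST S P L) (M : S → Option P) : Prop :=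
  IsMatching I M ∧ ∀ s p, ¬ Blocks I M s p

/-- the number of assigned agents in a matching -/
noncomputable def msize {A B : Type} [Fintype A] (M : A → Option B) : ℕ :=
  (Finset.univ.filter (fun a => (M a).isSome)).card

/-- Feasibility of `(x, a, b)` in the IP model `J` for MAX-SPA-ST: all variables
are binary, unacceptable pairs are forced to `0` (constraint 1), each student is
assigned at most once (2), project and lecturer capacities hold (3)–(4), and the
stability constraints (5)–(7) hold, where `S_{ij}` is the set of projects ranked
by `s_i` at least as highly as `p_j`, `T_{ik}` the set of students other than
`s_i` ranked by `l_k` at least as highly as `s_i`, and `T_{ijk}` its subset of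
students finding `p_j` acceptable. -/
def Feasible [Fintype S] [Fintype P] (I : SPAST S P L) (x a b : S → P → ℤ) : Prop :=
  (∀ s p, x s p = 0 ∨ x s p = 1) ∧
  (∀ s p, a s p = 0 ∨ a s p = 1) ∧
  (∀ s p, b s p = 0 ∨ b s p = 1) ∧
  -- (1)
  (∀ s p, ¬ I.acc s p → x s p = 0) ∧
  -- (2)
  (∀ s, ∑ p, x s p ≤ 1) ∧
  -- (3)
  (∀ p, ∑ s, x s p ≤ (I.cap p : ℤ)) ∧
  -- (4)
  (∀ k, ∑ s, ∑ p ∈ Finset.univ.filter (fun p => I.lec p = k), x s p ≤ (I.dcap k : ℤ)) ∧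
  -- (5)
  (∀ s p, I.acc s p →
    1 - ∑ r ∈ Finset.univ.filter (fun r => I.acc s r ∧ I.sRank s r ≤ I.sRank s p), x s r
      ≤ a s p + b s p) ∧
  -- (6)
  (∀ s p, I.acc s p →
    ∑ u ∈ Finset.univ.filter
        (fun u => I.lRank (I.lec p) u ≤ I.lRank (I.lec p) s ∧ u ≠ s),
      ∑ r ∈ Finset.univ.filter (fun r => I.lec r = I.lec p), x u r
      ≥ (I.dcap (I.lec p) : ℤ) * a s p) ∧
  -- (7)
  (∀ s p, I.acc s p →
    ∑ u ∈ Finset.univ.filter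
        (fun u => I.lRank (I.lec p) u ≤ I.lRank (I.lec p) s ∧ u ≠ s ∧ I.acc u p),
      x u p ≥ (I.cap p : ℤ) * b s p)

/-- The feasible solutions of the IP model `J`, projected to the
`x`-variables, are exactly the stable matchings of `I`: for binary `x` and the
matching `M` given by `M(s_i) = p_j ↔ x_{ij} = 1`, some `(α, β)` makes
`(x, α, β)` feasible iff `M` is stable. -/
theorem stmt7 [Fintype S] [Fintype P] (I : SPAST S P L)
    (x : S → P → ℤ) (hx : ∀ s p, x s p = 0 ∨ x s p = 1)
    (M : S → Option P) (hMx : ∀ s p, M s = some p ↔ x s p = 1) :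
    (∃ a b, Feasible I x a b) ↔ Stable I M := by
  classical
  have hxnn : ∀ s p, (0:ℤ) ≤ x s p := fun s p => by rcases hx s p with h | h <;> omega
  have hxite : ∀ s r, x s r = if M s = some r then 1 else 0 := by
    intro s r
    by_cases hM : M s = some r
    · simp [hM, (hMx s r).1 hM]
    · have hne : x s r ≠ 1 := fun h => hM ((hMx s r).2 h)
      rcases hx s r with h | h
      · simp [hM, h]
      · exact absurd h hne
  -- sum over a set of students, fixed project
  have hsumS : ∀ (U : Finset S) (p : P),
      ∑ u ∈ U, x u p = ((U.filter (fun u => M u = some p)).card : ℤ) := by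
    intro U p
    rw [Finset.sum_congr rfl (fun u _ => hxite u p)]
    exact Finset.sum_boole _ _
  -- sum over a set of projects, fixed student
  have hsumP : ∀ (T : Finset P) (s : S),
      ∑ r ∈ T, x s r = if ∃ p ∈ T, M s = some p then 1 else 0 := by
    intro T s
    rw [Finset.sum_congr rfl (fun r _ => hxite s r)]
    cases hM : M s with
    | none => simp
    | some p0 =>
      simp only [hM, Option.some.injEq]
      rw [show (∑ r ∈ T, if p0 = r then (1:ℤ) else 0) = if p0 ∈ T then 1 else 0 from
        Finset.sum_ite_eq T p0 (fun _ => (1:ℤ))]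
      congr 1
      simp [eq_comm]
  -- lecturer double sum
  have hsumLec : ∀ (U : Finset S) (k : L),
      ∑ u ∈ U, ∑ r ∈ Finset.univ.filter (fun r => I.lec r = k), x u r
        = ((U.filter (fun u => ∃ p, M u = some p ∧ I.lec p = k)).card : ℤ) := by
    intro U k
    have h1 : ∀ u, ∑ r ∈ Finset.univ.filter (fun r => I.lec r = k), x u r
        = if (∃ p, M u = some p ∧ I.lec p = k) then (1:ℤ) else 0 := by
      intro u
      rw [hsumP]
      congr 1
      simp only [Finset.mem_filter, Finset.mem_univ, true_and, eq_iff_iff]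
      constructor
      · rintro ⟨q, hq1, hq2⟩; exact ⟨q, hq2, hq1⟩
      · rintro ⟨q, hq1, hq2⟩; exact ⟨q, hq2, hq1⟩
    rw [Finset.sum_congr rfl (fun u _ => h1 u)]
    exact Finset.sum_boole _ _
  constructor
  · rintro ⟨a, b, _, ha01, hb01, h1, _, h3, h4, h5, h6, h7⟩
    have hMatch : IsMatching I M := by
      refine ⟨?_, ?_, ?_⟩
      · intro s p hM
        by_contra haccn
        have h0 := h1 s p haccn
        have h1' := (hMx s p).1 hM
        omega
      · intro p
        have := h3 p
        rw [hsumS] at this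
        exact_mod_cast this
      · intro k
        have := h4 k
        rw [hsumLec] at this
        exact_mod_cast this
    refine ⟨hMatch, ?_⟩
    rintro s p ⟨⟨hap, hwant⟩, hcases⟩
    -- sum over S_{sp} is 0
    have hsum0 : ∑ r ∈ Finset.univ.filter
        (fun r => I.acc s r ∧ I.sRank s r ≤ I.sRank s p), x s r = 0 := by
      rw [hsumP, if_neg]
      rintro ⟨p', hp'mem, hp'⟩
      simp only [Finset.mem_filter, Finset.mem_univ, true_and] at hp'mem
      rcases hwant with h | ⟨p'', hM, hrank⟩
      · rw [h] at hp'; exact nomatch hp'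
      · rw [hM] at hp'
        have : p'' = p' := Option.some.inj hp'
        subst this
        omega
    have h5' := h5 s p hap
    rw [hsum0] at h5'
    have hab : a s p = 1 ∨ b s p = 1 := by
      rcases ha01 s p with h | h <;> rcases hb01 s p with h' | h' <;> omega
    rcases hab with ha | hb
    · -- lecturer full, all assignees of lec p weakly better than s
      have h6' := h6 s p hap
      rw [ha, mul_one, hsumLec] at h6'
      have h4' := h4 (I.lec p)
      rw [hsumLec] at h4'
      set U := Finset.univ.filter
        (fun u => I.lRank (I.lec p) u ≤ I.lRank (I.lec p) s ∧ u ≠ s) with hU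
      set pr := fun u => ∃ q, M u = some q ∧ I.lec q = I.lec p with hpr
      have hsub : U.filter pr ⊆ Finset.univ.filter pr :=
        Finset.filter_subset_filter pr (Finset.subset_univ U)
      have hcle : (U.filter pr).card ≤ (Finset.univ.filter pr).card :=
        Finset.card_le_card hsub
      have hcard1 : (I.dcap (I.lec p) : ℤ) ≤ ((U.filter pr).card : ℤ) := h6'
      have hcard1' : I.dcap (I.lec p) ≤ (U.filter pr).card := by exact_mod_cast hcard1
      have hcard2 : (Finset.univ.filter pr).card ≤ I.dcap (I.lec p) := by exact_mod_cast h4'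
      have heqA : lecAssignees I M (I.lec p) = Finset.univ.filter pr := rfl
      have heq : Finset.univ.filter pr = U.filter pr :=
        (Finset.eq_of_subset_of_card_le hsub (by omega)).symm
      have hLF : LecFull I M (I.lec p) := by
        unfold LecFull
        rw [heqA]
        omega
      have hmem : ∀ u ∈ lecAssignees I M (I.lec p),
          I.lRank (I.lec p) u ≤ I.lRank (I.lec p) s ∧ u ≠ s := by
        intro u hu
        rw [heqA, heq] at hu
        have := Finset.mem_of_mem_filter u hu
        rw [hU] at this
        simpa using this
      rcases hcases with ⟨_, hnLF⟩ | ⟨_, _, hor⟩ | ⟨_, s', hs', hlt⟩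
      · exact hnLF hLF
      · rcases hor with hsin | ⟨s', hs', hlt⟩
        · exact (hmem s hsin).2 rfl
        · have := (hmem s' hs').1; omega
      · have hs'A : s' ∈ lecAssignees I M (I.lec p) := by
          simp only [projAssignees, lecAssignees, Finset.mem_filter, Finset.mem_univ,
            true_and] at hs' ⊢
          exact ⟨p, hs', rfl⟩
        have := (hmem s' hs'A).1; omega
    · -- project full, all assignees of p weakly better than s
      have h7' := h7 s p hap
      rw [hb, mul_one, hsumS] at h7'
      have h3' := h3 p
      rw [hsumS] at h3'
      set T := Finset.univ.filter
        (fun u => I.lRank (I.lec p) u ≤ I.lRank (I.lec p) s ∧ u ≠ s ∧ I.acc u p) with hT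
      set pr := fun u => M u = some p with hpr
      have hsub : T.filter pr ⊆ Finset.univ.filter pr :=
        Finset.filter_subset_filter pr (Finset.subset_univ T)
      have hcle : (T.filter pr).card ≤ (Finset.univ.filter pr).card :=
        Finset.card_le_card hsub
      have hcard1' : I.cap p ≤ (T.filter pr).card := by exact_mod_cast h7'
      have hcard2 : (Finset.univ.filter pr).card ≤ I.cap p := by exact_mod_cast h3'
      have heqA : projAssignees M p = Finset.univ.filter pr := rfl
      have heq : Finset.univ.filter pr = T.filter pr :=
        (Finset.eq_of_subset_of_card_le hsub (by omega)).symm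
      have hPF : ProjFull I M p := by
        unfold ProjFull
        rw [heqA]
        omega
      have hmem : ∀ u ∈ projAssignees M p,
          I.lRank (I.lec p) u ≤ I.lRank (I.lec p) s := by
        intro u hu
        rw [heqA, heq] at hu
        have := Finset.mem_of_mem_filter u hu
        rw [hT] at this
        simp only [Finset.mem_filter, Finset.mem_univ, true_and] at this
        exact this.1
      rcases hcases with ⟨hnPF, _⟩ | ⟨hnPF, _⟩ | ⟨_, s', hs', hlt⟩
      · exact hnPF hPF
      · exact hnPF hPF
      · have := hmem s' hs'; omega
  · rintro ⟨⟨haccM, hcapM, hdcapM⟩, hstab⟩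
    set C : S → P → Prop := fun s p => I.acc s p ∧
      ∑ r ∈ Finset.univ.filter (fun r => I.acc s r ∧ I.sRank s r ≤ I.sRank s p), x s r = 0
      with hC
    -- C implies no matched project is in S_{sp}
    have hnotin : ∀ s p, C s p → ∀ p', M s = some p' →
        ¬(I.acc s p' ∧ I.sRank s p' ≤ I.sRank s p) := by
      intro s p hCsp p' hM hcon
      have h0 := hCsp.2
      rw [hsumP, if_pos] at h0
      · exact one_ne_zero h0
      · exact ⟨p', by simp [hcon.1, hcon.2], hM⟩
    have hwants : ∀ s p, C s p → WantsToMove I M s p := by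
      intro s p hCsp
      refine ⟨hCsp.1, ?_⟩
      cases hM : M s with
      | none => exact Or.inl rfl
      | some p' =>
        refine Or.inr ⟨p', rfl, ?_⟩
        have hap' := haccM s p' hM
        have := hnotin s p hCsp p' hM
        by_contra hlt
        exact this ⟨hap', by omega⟩
    have hnself : ∀ s p, C s p → M s ≠ some p := by
      intro s p hCsp hM
      exact hnotin s p hCsp p hM ⟨hCsp.1, le_refl _⟩
    refine ⟨fun s p => if C s p ∧ ¬ ProjFull I M p then 1 else 0,
            fun s p => if C s p ∧ ProjFull I M p then 1 else 0,
            hx,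
            fun s p => by
              by_cases h : C s p ∧ ¬ ProjFull I M p
              · exact Or.inr (if_pos h)
              · exact Or.inl (if_neg h),
            fun s p => by
              by_cases h : C s p ∧ ProjFull I M p
              · exact Or.inr (if_pos h)
              · exact Or.inl (if_neg h),
            ?_, ?_, ?_, ?_, ?_, ?_, ?_⟩
    · -- (1)
      intro s p hnacc
      rcases hx s p with h | h
      · exact h
      · exact absurd (haccM s p ((hMx s p).2 h)) hnacc
    · -- (2)
      intro s
      rw [show (∑ p, x s p) = ∑ p ∈ Finset.univ, x s p from rfl, hsumP]
      split <;> norm_num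
    · -- (3)
      intro p
      rw [show (∑ u, x u p) = ∑ u ∈ Finset.univ, x u p from rfl, hsumS]
      exact_mod_cast hcapM p
    · -- (4)
      intro k
      rw [show (∑ u, ∑ r ∈ Finset.univ.filter (fun r => I.lec r = k), x u r)
          = ∑ u ∈ Finset.univ, ∑ r ∈ Finset.univ.filter (fun r => I.lec r = k), x u r
          from rfl, hsumLec]
      exact_mod_cast hdcapM k
    · -- (5)
      intro s p hap
      beta_reduce
      by_cases hs0 : ∑ r ∈ Finset.univ.filter
          (fun r => I.acc s r ∧ I.sRank s r ≤ I.sRank s p), x s r = 0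
      · have hCsp : C s p := ⟨hap, hs0⟩
        conv_lhs => rw [hs0]
        by_cases hPF : ProjFull I M p
        · rw [if_neg (fun hcon => hcon.2 hPF), if_pos ⟨hCsp, hPF⟩]
          norm_num
        · rw [if_pos ⟨hCsp, hPF⟩, if_neg (fun hcon => hPF hcon.2)]
          norm_num
      · have h01 : ∑ r ∈ Finset.univ.filter
            (fun r => I.acc s r ∧ I.sRank s r ≤ I.sRank s p), x s r = 1 := by
          rw [hsumP] at hs0 ⊢
          by_cases hex : ∃ q ∈ Finset.univ.filter
              (fun r => I.acc s r ∧ I.sRank s r ≤ I.sRank s p), M s = some q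
          · rw [if_pos hex]
          · exact absurd (if_neg hex) hs0
        conv_lhs => rw [h01]
        split_ifs <;> norm_num
    · -- (6)
      intro s p hap
      beta_reduce
      by_cases hA : C s p ∧ ¬ ProjFull I M p
      · rw [if_pos hA, mul_one]
        obtain ⟨hCsp, hnPF⟩ := hA
        have hW := hwants s p hCsp
        have hnB := hstab s p
        unfold Blocks at hnB
        push_neg at hnB
        have hcases := hnB hW
        obtain ⟨hc1, hc2, _⟩ := hcases
        have hLF : LecFull I M (I.lec p) := hc1 hnPF
        obtain ⟨hsnot, hworse⟩ := hc2 hnPF hLF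
        have hsubA : lecAssignees I M (I.lec p) ⊆
            (Finset.univ.filter
              (fun u => I.lRank (I.lec p) u ≤ I.lRank (I.lec p) s ∧ u ≠ s)).filter
              (fun u => ∃ q, M u = some q ∧ I.lec q = I.lec p) := by
          intro u hu
          have hupr : ∃ q, M u = some q ∧ I.lec q = I.lec p := by
            simpa [lecAssignees] using hu
          have hune : u ≠ s := fun h => hsnot (h ▸ hu)
          have hur : I.lRank (I.lec p) u ≤ I.lRank (I.lec p) s := by
            have := hworse u hu
            omega
          simp only [Finset.mem_filter, Finset.mem_univ, true_and]
          exact ⟨⟨hur, hune⟩, hupr⟩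
        rw [hsumLec]
        have hcard := Finset.card_le_card hsubA
        have hLF' : (lecAssignees I M (I.lec p)).card = I.dcap (I.lec p) := hLF
        have : I.dcap (I.lec p) ≤
            ((Finset.univ.filter
              (fun u => I.lRank (I.lec p) u ≤ I.lRank (I.lec p) s ∧ u ≠ s)).filter
              (fun u => ∃ q, M u = some q ∧ I.lec q = I.lec p)).card := by omega
        exact_mod_cast this
      · rw [if_neg hA, mul_zero]
        refine Finset.sum_nonneg fun u _ => Finset.sum_nonneg fun r _ => hxnn u r
    · -- (7)
      intro s p hap
      beta_reduce
      by_cases hB : C s p ∧ ProjFull I M p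
      · rw [if_pos hB, mul_one]
        obtain ⟨hCsp, hPF⟩ := hB
        have hW := hwants s p hCsp
        have hnB := hstab s p
        unfold Blocks at hnB
        push_neg at hnB
        have hcases := hnB hW
        obtain ⟨_, _, hc3⟩ := hcases
        have hworse := hc3 hPF
        have hsubA : projAssignees M p ⊆
            (Finset.univ.filter
              (fun u => I.lRank (I.lec p) u ≤ I.lRank (I.lec p) s ∧ u ≠ s ∧
                I.acc u p)).filter (fun u => M u = some p) := by
          intro u hu
          have hupr : M u = some p := by simpa [projAssignees] using hu
          have hune : u ≠ s := fun h => hnself s p hCsp (h ▸ hupr)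
          have hur : I.lRank (I.lec p) u ≤ I.lRank (I.lec p) s := by
            have := hworse u hu
            omega
          simp only [Finset.mem_filter, Finset.mem_univ, true_and]
          exact ⟨⟨hur, hune, haccM u p hupr⟩, hupr⟩
        rw [hsumS]
        have hcard := Finset.card_le_card hsubA
        have hPF' : (projAssignees M p).card = I.cap p := hPF
        have : I.cap p ≤
            ((Finset.univ.filter
              (fun u => I.lRank (I.lec p) u ≤ I.lRank (I.lec p) s ∧ u ≠ s ∧
                I.acc u p)).filter (fun u => M u = some p)).card := by omega
        exact_mod_cast this
      · rw [if_neg hB, mul_zero]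
        exact Finset.sum_nonneg fun u _ => hxnn u p
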